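/- Let μ, ν, λ be Borel probability measures on ℝ, and assume d_e(μ,ν) < ∞. Then the Cramér distance is invariant under independent additive noise: d_c(λ ∗ μ, λ ∗ ν) ≤ d_c(μ, ν), where λ ∗ μ denotes the convolution of λ and μ (the law of A + U for independent A ∼ λ, U ∼ μ). -/

import Mathlib

open MeasureTheory ProbabilityTheory
open scoped ENNReal

/-- The energy distance (squared Cramér distance) between two measures on `ℝ`,
as the integral of the squared difference of their cumulative distribution functions. -/
noncomputable def energyDist (μ ν : Measure ℝ) : ℝ≥0∞ :=
  ∫⁻ x, ENNReal.ofReal ((cdf μ x - cdf ν x) ^ 2)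

/-- The Cramér distance between two measures on `ℝ`. -/
noncomputable def cramerDist (μ ν : Measure ℝ) : ℝ≥0∞ :=
  energyDist μ ν ^ (1 / 2 : ℝ)

lemma measurable_cdf' (μ : Measure ℝ) : Measurable (cdf μ) :=
  (monotone_cdf μ).measurable

/-- CDF of a convolution. -/
lemma cdf_conv_eq (lam μ : Measure ℝ) [IsProbabilityMeasure lam] [IsProbabilityMeasure μ]
    (x : ℝ) : cdf (Measure.conv lam μ) x = ∫ a, cdf μ (x - a) ∂lam := by
  have hmeas : Measurable fun a : ℝ => cdf μ (x - a) :=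
    (measurable_cdf' μ).comp (measurable_const.sub measurable_id)
  have h1 : (Measure.conv lam μ) (Set.Iic x) = ∫⁻ a, μ (Set.Iic (x - a)) ∂lam := by
    rw [Measure.conv, Measure.map_apply measurable_add measurableSet_Iic]
    have hset : (fun p : ℝ × ℝ => p.1 + p.2) ⁻¹' Set.Iic x
        = {p : ℝ × ℝ | p.2 ≤ x - p.1} := by
      ext p; simp [le_sub_iff_add_le, add_comm]
    rw [hset, Measure.prod_apply (s := {p : ℝ × ℝ | p.2 ≤ x - p.1})
      (measurableSet_le measurable_snd (measurable_const.sub measurable_fst))]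
    exact lintegral_congr fun a => by congr 1
  have h2 : ∀ a : ℝ, μ (Set.Iic (x - a)) = ENNReal.ofReal (cdf μ (x - a)) := fun a =>
    (ofReal_cdf μ (x - a)).symm
  rw [cdf_eq_real, measureReal_def, h1]
  simp_rw [h2]
  rw [MeasureTheory.integral_eq_lintegral_of_nonneg_ae
    (Filter.Eventually.of_forall fun a => cdf_nonneg μ (x - a)) hmeas.aestronglyMeasurable]

/-- Jensen / Cauchy–Schwarz: square of the integral is at most the integral of the square. -/
lemma sq_integral_le (lam : Measure ℝ) [IsProbabilityMeasure lam] (g : ℝ → ℝ)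
    (hg : Integrable g lam) :
    ENNReal.ofReal ((∫ a, g a ∂lam) ^ 2) ≤ ∫⁻ a, ENNReal.ofReal (g a ^ 2) ∂lam := by
  set f : ℝ → ℝ≥0∞ := fun a => ENNReal.ofReal |g a| with hf
  have hfm : AEMeasurable f lam :=
    ENNReal.measurable_ofReal.comp_aemeasurable hg.abs.aemeasurable
  have habs : |∫ a, g a ∂lam| ≤ ∫ a, |g a| ∂lam := by
    simpa [Real.norm_eq_abs] using norm_integral_le_integral_norm g (μ := lam)
  have step1 : ENNReal.ofReal ((∫ a, g a ∂lam) ^ 2)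
      ≤ (∫⁻ a, f a ∂lam) ^ 2 := by
    rw [← sq_abs (∫ a, g a ∂lam)]
    have h2 : ENNReal.ofReal (|∫ a, g a ∂lam| ^ 2)
        ≤ ENNReal.ofReal ((∫ a, |g a| ∂lam) ^ 2) := by
      apply ENNReal.ofReal_le_ofReal
      exact pow_le_pow_left₀ (abs_nonneg _) habs 2
    refine h2.trans (le_of_eq ?_)
    rw [ENNReal.ofReal_pow (integral_nonneg fun a => abs_nonneg (g a)),
      ofReal_integral_eq_lintegral_ofReal hg.abs
        (Filter.Eventually.of_forall fun a => abs_nonneg (g a))]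
  have hconj : Real.HolderConjugate 2 2 := Real.HolderConjugate.two_two
  have holder := ENNReal.lintegral_mul_le_Lp_mul_Lq lam hconj hfm
    (aemeasurable_const : AEMeasurable (fun _ : ℝ => (1 : ℝ≥0∞)) lam)
  simp only [mul_one, Pi.mul_apply, Pi.one_apply, ENNReal.one_rpow, lintegral_const,
    measure_univ, ENNReal.one_rpow, one_mul] at holder
  have hf2 : ∀ a : ℝ, f a ^ (2 : ℝ) = ENNReal.ofReal (g a ^ 2) := by
    intro a
    rw [hf, ENNReal.ofReal_rpow_of_nonneg (abs_nonneg _) (by norm_num)]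
    congr 1
    rw [show |g a| ^ (2 : ℝ) = |g a| ^ (2 : ℕ) from Real.rpow_natCast _ 2, sq_abs]
  have step2 : (∫⁻ a, f a ∂lam) ^ 2 ≤ ∫⁻ a, ENNReal.ofReal (g a ^ 2) ∂lam := by
    calc (∫⁻ a, f a ∂lam) ^ 2
        ≤ ((∫⁻ a, f a ^ (2 : ℝ) ∂lam) ^ (1 / 2 : ℝ)) ^ 2 := by
          exact pow_le_pow_left₀ zero_le holder 2
      _ = ∫⁻ a, f a ^ (2 : ℝ) ∂lam := by
          rw [← ENNReal.rpow_natCast (_ ^ (1 / 2 : ℝ)) 2, ← ENNReal.rpow_mul]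
          norm_num
      _ = ∫⁻ a, ENNReal.ofReal (g a ^ 2) ∂lam := by
          exact lintegral_congr fun a => hf2 a
  exact step1.trans step2

/-- The Cramér distance is invariant under independent additive noise:
`d_c(λ ∗ μ, λ ∗ ν) ≤ d_c(μ, ν)`. -/
theorem cramerDist_conv_le (μ ν lam : Measure ℝ)
    [IsProbabilityMeasure μ] [IsProbabilityMeasure ν] [IsProbabilityMeasure lam]
    (h : energyDist μ ν < ⊤) :
    cramerDist (Measure.conv lam μ) (Measure.conv lam ν) ≤ cramerDist μ ν := by
  have hmain : energyDist (Measure.conv lam μ) (Measure.conv lam ν) ≤ energyDist μ ν := by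
    set F : ℝ → ℝ := fun y => cdf μ y - cdf ν y with hFdef
    have hFmeas : Measurable F := (measurable_cdf' μ).sub (measurable_cdf' ν)
    have hint : ∀ (ρ : Measure ℝ) [IsProbabilityMeasure ρ] (x : ℝ),
        Integrable (fun a : ℝ => cdf ρ (x - a)) lam := by
      intro ρ _ x
      refine (integrable_const (1 : ℝ)).mono'
        ((measurable_cdf' ρ).comp (measurable_const.sub measurable_id)).aestronglyMeasurable
        (Filter.Eventually.of_forall fun a => ?_)
      rw [Real.norm_eq_abs, abs_of_nonneg (cdf_nonneg ρ _)]
      exact cdf_le_one ρ _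
    have key : ∀ x : ℝ, cdf (Measure.conv lam μ) x - cdf (Measure.conv lam ν) x
        = ∫ a, F (x - a) ∂lam := by
      intro x
      rw [cdf_conv_eq lam μ x, cdf_conv_eq lam ν x, ← integral_sub (hint μ x) (hint ν x)]
    have hFint : ∀ x : ℝ, Integrable (fun a : ℝ => F (x - a)) lam := fun x =>
      (hint μ x).sub (hint ν x)
    calc energyDist (Measure.conv lam μ) (Measure.conv lam ν)
        = ∫⁻ x, ENNReal.ofReal ((∫ a, F (x - a) ∂lam) ^ 2) := by
          unfold energyDist
          exact lintegral_congr fun x => by rw [key x]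
      _ ≤ ∫⁻ x, ∫⁻ a, ENNReal.ofReal (F (x - a) ^ 2) ∂lam := by
          exact lintegral_mono fun x => sq_integral_le lam _ (hFint x)
      _ = ∫⁻ a, (∫⁻ x, ENNReal.ofReal (F (x - a) ^ 2)) ∂lam := by
          exact lintegral_lintegral_swap (μ := volume) (ν := lam)
            (ENNReal.measurable_ofReal.comp
              ((hFmeas.comp (measurable_fst.sub measurable_snd)).pow_const 2)).aemeasurable
      _ = ∫⁻ _ : ℝ, energyDist μ ν ∂lam := by
          refine lintegral_congr fun a => ?_
          exact lintegral_sub_right_eq_self (fun y => ENNReal.ofReal (F y ^ 2)) a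
      _ = energyDist μ ν := by simp
  unfold cramerDist
  exact ENNReal.rpow_le_rpow hmain (by norm_num)
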